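/- (Properties of the explicit Morawetz multiplier coefficient.) Let M > 0. Define a : (2M,∞) → ℝ by a(r) = r^{-2} ( (r−3M)(r+2M) + 6M² log((r−2M)/M) ), and define the fourth-order expression (La)(r) = − r^{-2} d/dr [ (1 − 2M/r) r² d/dr { (1 − 2M/r) (2r²)^{-1} d/dr ( r² a(r) ) } ]. Then a(3M) = 0, and there is a constant c > 0 (depending only on M) such that for all r > 2M: a'(r) ≥ c r^{-2} and (La)(r) ≥ c r^{-4}. -/

import Mathlib

open MeasureTheory Set

/-- The explicit Morawetz multiplier coefficient
`a(r) = r⁻² ((r-3M)(r+2M) + 6M² log((r-2M)/M))` on the Schwarzschild exterior. -/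
noncomputable def morawetzA (M : ℝ) : ℝ → ℝ :=
  fun r => r ^ (-2:ℤ) * ((r - 3*M) * (r + 2*M) + 6 * M ^ 2 * Real.log ((r - 2*M) / M))

/-- The fourth-order expression
`(La)(r) = -r⁻² d/dr [ (1-2M/r) r² d/dr { (1-2M/r) (2r²)⁻¹ d/dr (r² a(r)) } ]`. -/
noncomputable def morawetzLa (M : ℝ) : ℝ → ℝ :=
  fun r => -(r ^ (-2:ℤ)) *
    deriv (fun s => (1 - 2*M/s) * s ^ 2 *
      deriv (fun t => (1 - 2*M/t) * (2 * t ^ 2)⁻¹ *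
        deriv (fun w => w ^ 2 * morawetzA M w) t) s) r

namespace MorawetzAux

lemma zpow_neg_two' {r : ℝ} : r ^ (-2:ℤ) = (r ^ 2)⁻¹ := by
  rw [zpow_neg]; norm_cast

lemma zpow_neg_three' {r : ℝ} : r ^ (-3:ℤ) = (r ^ 3)⁻¹ := by
  rw [zpow_neg]; norm_cast

lemma zpow_neg_four' {r : ℝ} : r ^ (-4:ℤ) = (r ^ 4)⁻¹ := by
  rw [zpow_neg]; norm_cast

lemma hasDerivAt_G {M : ℝ} (hM : 0 < M) {r : ℝ} (hr : 2*M < r) :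
    HasDerivAt (fun w : ℝ => (w - 3*M) * (w + 2*M) + 6 * M ^ 2 * Real.log ((w - 2*M) / M))
      (2*r - M + 6*M^2 / (r - 2*M)) r := by
  have hu : 0 < r - 2*M := by linarith
  have h1 : HasDerivAt (fun w : ℝ => (w - 3*M) * (w + 2*M)) ((r + 2*M) + (r - 3*M)) r := by
    have := ((hasDerivAt_id r).sub_const (3*M)).mul ((hasDerivAt_id r).add_const (2*M))
    exact this.congr_deriv (by simp)
  have hinner : HasDerivAt (fun w : ℝ => (w - 2*M)/M) (1/M) r := by
    simpa using ((hasDerivAt_id r).sub_const (2*M)).div_const M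
  have hlog : HasDerivAt (fun w : ℝ => Real.log ((w - 2*M)/M)) ((r - 2*M)⁻¹) r := by
    have h := (Real.hasDerivAt_log (ne_of_gt (div_pos hu hM))).comp r hinner
    refine h.congr_deriv ?_
    field_simp
  have h := h1.add (hlog.const_mul (6 * M ^ 2))
  refine h.congr_deriv ?_
  rw [div_eq_mul_inv]
  ring

lemma hasDerivAt_inner {M : ℝ} (hM : 0 < M) {r : ℝ} (hr : 2*M < r) :
    HasDerivAt (fun w : ℝ => w ^ 2 * morawetzA M w)
      (2*r - M + 6*M^2 / (r - 2*M)) r := by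
  apply (hasDerivAt_G hM hr).congr_of_eventuallyEq
  filter_upwards [isOpen_Ioi.mem_nhds (show r ∈ Ioi (2*M) from hr)] with w hw
  have hw0 : w ≠ 0 := by
    have : 0 < w := lt_trans (by linarith) hw
    exact this.ne'
  simp only [morawetzA, zpow_neg_two']
  field_simp

lemma deriv_inner_eq {M : ℝ} (hM : 0 < M) {r : ℝ} (hr : 2*M < r) :
    deriv (fun w : ℝ => w ^ 2 * morawetzA M w) r = 2*r - M + 6*M^2 / (r - 2*M) :=
  (hasDerivAt_inner hM hr).deriv

lemma hasDerivAt_mid {M : ℝ} (hM : 0 < M) {s : ℝ} (hs : 2*M < s) :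
    HasDerivAt (fun t : ℝ => (1 - 2*M/t) * (2 * t ^ 2)⁻¹ *
        deriv (fun w : ℝ => w ^ 2 * morawetzA M w) t)
      ((-s^2 + 5*M*s - 12*M^2) / s^4) s := by
  have hs0 : (0:ℝ) < s := lt_trans (by linarith) hs
  have hP : HasDerivAt (fun t : ℝ => (2*t^2 - 5*M*t + 8*M^2) / (2*t^3))
      ((-s^2 + 5*M*s - 12*M^2) / s^4) s := by
    have hN : HasDerivAt (fun t : ℝ => 2*t^2 - 5*M*t + 8*M^2) (4*s - 5*M) s := by
      have := (((hasDerivAt_pow 2 s).const_mul 2).sub ((hasDerivAt_id s).const_mul (5*M))).add_const (8*M^2)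
      refine this.congr_deriv ?_; push_cast; ring
    have hD : HasDerivAt (fun t : ℝ => 2*t^3) (6*s^2) s := by
      have := (hasDerivAt_pow 3 s).const_mul 2
      refine this.congr_deriv ?_; push_cast; ring
    have h := hN.div hD (by positivity)
    refine h.congr_deriv ?_
    field_simp
    ring
  apply hP.congr_of_eventuallyEq
  filter_upwards [isOpen_Ioi.mem_nhds (show s ∈ Ioi (2*M) from hs)] with t ht
  have ht' : 2*M < t := ht
  have ht0 : (0:ℝ) < t := lt_trans (by linarith) ht'
  have htu : (0:ℝ) < t - 2*M := by linarith
  rw [deriv_inner_eq hM ht']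
  field_simp
  ring

lemma deriv_mid_eq {M : ℝ} (hM : 0 < M) {s : ℝ} (hs : 2*M < s) :
    deriv (fun t : ℝ => (1 - 2*M/t) * (2 * t ^ 2)⁻¹ *
        deriv (fun w : ℝ => w ^ 2 * morawetzA M w) t) s
      = (-s^2 + 5*M*s - 12*M^2) / s^4 :=
  (hasDerivAt_mid hM hs).deriv

lemma hasDerivAt_out {M : ℝ} (hM : 0 < M) {r : ℝ} (hr : 2*M < r) :
    HasDerivAt (fun s : ℝ => (1 - 2*M/s) * s ^ 2 *
        deriv (fun t : ℝ => (1 - 2*M/t) * (2 * t ^ 2)⁻¹ *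
          deriv (fun w : ℝ => w ^ 2 * morawetzA M w) t) s)
      ((-7*M*r^2 + 44*M^2*r - 72*M^3) / r^4) r := by
  have hr0 : (0:ℝ) < r := lt_trans (by linarith) hr
  have hQ : HasDerivAt (fun s : ℝ => (-s^3 + 7*M*s^2 - 22*M^2*s + 24*M^3) / s^3)
      ((-7*M*r^2 + 44*M^2*r - 72*M^3) / r^4) r := by
    have hN : HasDerivAt (fun s : ℝ => -s^3 + 7*M*s^2 - 22*M^2*s + 24*M^3)
        (-3*r^2 + 14*M*r - 22*M^2) r := by
      have := (((((hasDerivAt_pow 3 r).neg).add ((hasDerivAt_pow 2 r).const_mul (7*M))).sub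
        ((hasDerivAt_id r).const_mul (22*M^2))).add_const (24*M^3))
      refine this.congr_deriv ?_; push_cast; ring
    have hD : HasDerivAt (fun s : ℝ => s^3) (3*r^2) r := by
      have := hasDerivAt_pow 3 r
      refine this.congr_deriv ?_; push_cast; ring
    have h := hN.div hD (by positivity)
    refine h.congr_deriv ?_
    field_simp
    ring
  apply hQ.congr_of_eventuallyEq
  filter_upwards [isOpen_Ioi.mem_nhds (show r ∈ Ioi (2*M) from hr)] with s hs
  have hs' : 2*M < s := hs
  have hs0 : (0:ℝ) < s := lt_trans (by linarith) hs'
  rw [deriv_mid_eq hM hs']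
  field_simp
  ring

lemma la_eq {M : ℝ} (hM : 0 < M) {r : ℝ} (hr : 2*M < r) :
    morawetzLa M r = (7*M*r^2 - 44*M^2*r + 72*M^3) / r^6 := by
  have hr0 : (0:ℝ) < r := lt_trans (by linarith) hr
  simp only [morawetzLa]
  rw [(hasDerivAt_out hM hr).deriv, zpow_neg_two']
  field_simp
  ring

lemma hasDerivAt_A {M : ℝ} (hM : 0 < M) {r : ℝ} (hr : 2*M < r) :
    HasDerivAt (morawetzA M)
      ((-2) * (r^3)⁻¹ * ((r - 3*M) * (r + 2*M) + 6 * M ^ 2 * Real.log ((r - 2*M) / M))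
        + (r^2)⁻¹ * (2*r - M + 6*M^2 / (r - 2*M))) r := by
  have hr0 : (0:ℝ) < r := lt_trans (by linarith) hr
  have h := (hasDerivAt_zpow (-2) r (Or.inl hr0.ne')).mul (hasDerivAt_G hM hr)
  refine h.congr_deriv ?_
  have h3 : (-2 - 1 : ℤ) = -3 := by norm_num
  rw [h3, zpow_neg_three', zpow_neg_two']
  push_cast
  ring

lemma log_bound {M : ℝ} (hM : 0 < M) {r : ℝ} (hr : 2*M < r) :
    Real.log ((r - 2*M)/M) ≤ (r - 2*M)/(16*M) + 1.78 := by
  have hu : 0 < r - 2*M := by linarith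
  have hsplit : Real.log ((r - 2*M)/M)
      = Real.log ((r - 2*M)/(16*M)) + 4 * Real.log 2 := by
    rw [show (r - 2*M)/M = ((r - 2*M)/(16*M)) * 2^4 by field_simp; ring,
      Real.log_mul (by positivity) (by positivity), Real.log_pow]
    push_cast; ring
  have hle : Real.log ((r - 2*M)/(16*M)) ≤ (r - 2*M)/(16*M) - 1 :=
    Real.log_le_sub_one_of_pos (by positivity)
  have h2 : Real.log 2 < 0.6931471808 := Real.log_two_lt_d9
  rw [hsplit]
  norm_num at *
  linarith

lemma derivA_ge {M : ℝ} (hM : 0 < M) {r : ℝ} (hr : 2*M < r) :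
    M/100 * r ^ (-2:ℤ) ≤ deriv (morawetzA M) r := by
  have hr0 : (0:ℝ) < r := lt_trans (by linarith) hr
  have hu : 0 < r - 2*M := by linarith
  rw [(hasDerivAt_A hM hr).deriv, zpow_neg_two']
  set L := Real.log ((r - 2*M)/M) with hL_def
  have hL : L ≤ (r - 2*M)/(16*M) + 1.78 := log_bound hM hr
  rw [← sub_nonneg]
  have expand : (-2) * (r^3)⁻¹ * ((r - 3*M) * (r + 2*M) + 6 * M ^ 2 * L)
        + (r^2)⁻¹ * (2*r - M + 6*M^2 / (r - 2*M)) - M/100 * (r^2)⁻¹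
      = (99*M*r*(r - 2*M) + 1200*M^2*(r - 2*M) + 600*M^2*r
          - 1200*M^2*(r - 2*M)*L) / (100 * r^3 * (r - 2*M)) := by
    field_simp
    ring
  rw [expand]
  apply div_nonneg _ (by positivity)
  have hL2 : 1200*M^2*(r - 2*M)*L ≤ 75*M*(r - 2*M)^2 + 2136*M^2*(r - 2*M) := by
    have h := mul_le_mul_of_nonneg_left hL
      (show (0:ℝ) ≤ 1200*M^2*(r - 2*M) by positivity)
    have heq : 1200*M^2*(r - 2*M) * ((r - 2*M)/(16*M) + 1.78)
        = 75*M*(r - 2*M)^2 + 2136*M^2*(r - 2*M) := by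
      field_simp
      ring
    rw [heq] at h
    linarith
  nlinarith [hL2, mul_nonneg hM.le (sq_nonneg (r - 2*M - 3*M)),
    mul_pos (mul_pos hM hM) hu, mul_pos (mul_pos hM hM) hM]

lemma la_ge {M : ℝ} (hM : 0 < M) {r : ℝ} (hr : 2*M < r) :
    M/100 * r ^ (-4:ℤ) ≤ morawetzLa M r := by
  have hr0 : (0:ℝ) < r := lt_trans (by linarith) hr
  rw [la_eq hM hr, zpow_neg_four', ← div_eq_mul_inv,
    div_le_div_iff₀ (by positivity) (by positivity)]
  have poly : M/100 * r^2 ≤ 7*M*r^2 - 44*M^2*r + 72*M^3 := by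
    nlinarith [mul_nonneg hM.le (sq_nonneg (699*r - 2200*M)),
      mul_pos (mul_pos hM hM) hM]
  have h := mul_le_mul_of_nonneg_right poly (show (0:ℝ) ≤ r^4 by positivity)
  calc M/100 * r^6 = (M/100 * r^2) * r^4 := by ring
    _ ≤ (7*M*r^2 - 44*M^2*r + 72*M^3) * r^4 := h

end MorawetzAux

/-- **Properties of the explicit Morawetz multiplier coefficient.** For `M > 0` the
function `a = morawetzA M` satisfies `a(3M) = 0`, and there is a constant `c > 0`
(depending only on `M`) such that `a'(r) ≥ c r⁻²` and `(La)(r) ≥ c r⁻⁴` for all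
`r > 2M`. -/
theorem morawetz_multiplier_properties (M : ℝ) (hM : 0 < M) :
    morawetzA M (3 * M) = 0 ∧
      ∃ c : ℝ, 0 < c ∧ ∀ r : ℝ, 2 * M < r →
        c * r ^ (-2:ℤ) ≤ deriv (morawetzA M) r ∧
        c * r ^ (-4:ℤ) ≤ morawetzLa M r := by
  constructor
  · unfold morawetzA
    rw [show 3*M - 2*M = M by ring, div_self hM.ne', Real.log_one]
    ring
  · exact ⟨M/100, by positivity,
      fun r hr => ⟨MorawetzAux.derivA_ge hM hr, MorawetzAux.la_ge hM hr⟩⟩
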